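/- Let F be a field, A_n = F[x₁,…,x_n, y₁,…,y_n], α_{ij} = x_i y_j − x_j y_i, and S_n the subalgebra of A_n generated by all α_{ij} (i < j). Then S_n is spanned over F by the set B_n of standard monomials α_{i₁j₁}⋯α_{i_r j_r} with i₁ ≤ ⋯ ≤ i_r, j₁ ≤ ⋯ ≤ j_r, i_s < j_s (including the empty product 1). -/

import Mathlib

open MvPolynomial

/-- A list of index pairs [(i₁,j₁),…,(i_r,j_r)] is standard if i₁ ≤ ⋯ ≤ i_r,
j₁ ≤ ⋯ ≤ j_r, and i_s < j_s for each s. -/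
def IsStandard {n : ℕ} (l : List (Fin n × Fin n)) : Prop :=
  (∀ p ∈ l, p.1 < p.2) ∧ (l.map Prod.fst).Chain' (· ≤ ·) ∧ (l.map Prod.snd).Chain' (· ≤ ·)

/-- Measure used for straightening: sum of squares of the spreads. -/
def mes {n : ℕ} (l : List (Fin n × Fin n)) : ℕ :=
  (l.map (fun p => ((p.2 : ℕ) - (p.1 : ℕ)) ^ 2)).sum

lemma mes_decomp {n : ℕ} (A B : List (Fin n × Fin n)) (x y : Fin n × Fin n) :
    mes (A ++ x :: y :: B) =
      mes A + (((x.2 : ℕ) - (x.1 : ℕ)) ^ 2 + (((y.2 : ℕ) - (y.1 : ℕ)) ^ 2 + mes B)) := by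
  simp [mes, List.map_append, List.sum_append]

lemma sq_lemma {a b c d : ℕ} (hab : a < b) (hbc : b < c) (hcd : c < d) :
    (c - a) ^ 2 + (d - b) ^ 2 < (d - a) ^ 2 + (c - b) ^ 2 ∧
    (b - a) ^ 2 + (d - c) ^ 2 < (d - a) ^ 2 + (c - b) ^ 2 := by
  have h1 : c - a = (b - a) + (c - b) := by omega
  have h2 : d - b = (c - b) + (d - c) := by omega
  have h3 : d - a = (b - a) + ((c - b) + (d - c)) := by omega
  have hx : 0 < b - a := by omega
  have hz : 0 < d - c := by omega
  rw [h1, h2, h3]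
  set x := b - a
  set y := c - b
  set z := d - c
  constructor <;> nlinarith [hx, hz, sq_nonneg y]

/-- Total preorder on index pairs given by lexicographic comparison. -/
def Rord (n : ℕ) (p q : Fin n × Fin n) : Prop :=
  (p.1 : ℕ) * n + (p.2 : ℕ) ≤ (q.1 : ℕ) * n + (q.2 : ℕ)

instance {n : ℕ} : DecidableRel (Rord n) := fun _ _ => Nat.decLe _ _
instance {n : ℕ} : IsTotal (Fin n × Fin n) (Rord n) := ⟨fun _ _ => Nat.le_total _ _⟩
instance {n : ℕ} : IsTrans (Fin n × Fin n) (Rord n) := ⟨fun _ _ _ => Nat.le_trans⟩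

lemma Rord.fst_le {n : ℕ} {p q : Fin n × Fin n} (h : Rord n p q) : p.1 ≤ q.1 := by
  by_contra hc
  push_neg at hc
  have h1 : (q.1 : ℕ) + 1 ≤ (p.1 : ℕ) := hc
  have h2 : (q.2 : ℕ) < n := q.2.isLt
  have h3 : ((q.1 : ℕ) + 1) * n ≤ (p.1 : ℕ) * n := Nat.mul_le_mul_right n h1
  have h4 : (q.1 : ℕ) * n + n = ((q.1 : ℕ) + 1) * n := by ring
  unfold Rord at h
  omega

lemma Rord.snd_le {n : ℕ} {p q : Fin n × Fin n} (h : Rord n p q) (he : p.1 = q.1) :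
    p.2 ≤ q.2 := by
  unfold Rord at h
  rw [he] at h
  have : (p.2 : ℕ) ≤ (q.2 : ℕ) := le_of_add_le_add_left h
  exact this

section Straighten

variable {F : Type*} [Field F] {n : ℕ}
  (α : Fin n → Fin n → MvPolynomial (Fin n ⊕ Fin n) F)

lemma pluecker
    (hα : ∀ i j, α i j = X (Sum.inl i) * X (Sum.inr j) - X (Sum.inl j) * X (Sum.inr i))
    (i j k l : Fin n) :
    α i j * α k l = α i l * α k j - α i k * α l j := by
  simp only [hα]; ring

lemma straighten
    (hα : ∀ i j, α i j = X (Sum.inl i) * X (Sum.inr j) - X (Sum.inl j) * X (Sum.inr i)) :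
    ∀ N (l : List (Fin n × Fin n)), mes l ≤ N → (∀ p ∈ l, p.1 < p.2) →
      (l.map (fun p => α p.1 p.2)).prod ∈ Submodule.span F
        (Set.range (fun l : {l : List (Fin n × Fin n) // IsStandard l} =>
          (l.1.map (fun p => α p.1 p.2)).prod)) := by
  intro N
  induction N using Nat.strong_induction_on with
  | _ N IH =>
    intro l hmes hl
    set f : Fin n × Fin n → MvPolynomial (Fin n ⊕ Fin n) F := fun p => α p.1 p.2 with hf
    set l' := List.insertionSort (Rord n) l with hl'def
    have hperm : l'.Perm l := List.perm_insertionSort (Rord n) l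
    have hprod : (l.map f).prod = (l'.map f).prod := ((hperm.map f).prod_eq).symm
    have hmes' : mes l' = mes l := List.Perm.sum_eq (hperm.map _)
    have hl'mem : ∀ p ∈ l', p.1 < p.2 := fun p hp => hl p (hperm.mem_iff.mp hp)
    have hsorted : l'.Pairwise (Rord n) := List.pairwise_insertionSort _ l
    have hch : l'.Chain' (Rord n) := hsorted.isChain
    have hfst : (l'.map Prod.fst).Chain' (· ≤ ·) := by
      unfold List.Chain'
      rw [List.isChain_map]
      exact hch.imp (fun a b h => Rord.fst_le h)
    by_cases hstd : IsStandard l'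
    · rw [hprod]
      exact Submodule.subset_span ⟨⟨l', hstd⟩, rfl⟩
    · have hsnd : ¬ (l'.map Prod.snd).Chain' (· ≤ ·) := fun h => hstd ⟨hl'mem, hfst, h⟩
      unfold List.Chain' at hsnd
      rw [List.isChain_map, List.isChain_iff_getElem] at hsnd
      push_neg at hsnd
      obtain ⟨i, hi, hviol⟩ := hsnd
      have hi' : i + 1 < l'.length := by omega
      have hii : i < l'.length := by omega
      set p := l'[i] with hp
      set q := l'[i+1] with hq
      have hviol' : (q.2 : ℕ) < (p.2 : ℕ) := by
        simpa [List.get_eq_getElem, ← hp, ← hq] using hviol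
      have hRpq : Rord n p q := by
        unfold List.Chain' at hch
        rw [List.isChain_iff_getElem] at hch
        have := hch i (by omega)
        simpa [List.get_eq_getElem, ← hp, ← hq] using this
      have hpmem : p ∈ l' := List.getElem_mem _
      have hqmem : q ∈ l' := List.getElem_mem _
      have hpj : (p.1 : ℕ) < (p.2 : ℕ) := hl'mem p hpmem
      have hkl : (q.1 : ℕ) < (q.2 : ℕ) := hl'mem q hqmem
      have hik : (p.1 : ℕ) < (q.1 : ℕ) := by
        rcases lt_or_eq_of_le (Rord.fst_le hRpq) with h | h
        · exact h
        · exact absurd (Rord.snd_le hRpq h) (by omega)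
      set A := l'.take i with hA
      set B := l'.drop (i + 2) with hB
      have hdecomp : l' = A ++ p :: q :: B := by
        conv_lhs => rw [← List.take_append_drop i l']
        rw [List.drop_eq_getElem_cons hii, List.drop_eq_getElem_cons hi']
      set l1 : List (Fin n × Fin n) := A ++ (p.1, q.2) :: (q.1, p.2) :: B with hl1
      set l2 : List (Fin n × Fin n) := A ++ (p.1, q.1) :: (q.2, p.2) :: B with hl2
      have hmemA : ∀ r ∈ A, r.1 < r.2 := fun r hr => hl'mem r (List.take_subset _ _ hr)
      have hmemB : ∀ r ∈ B, r.1 < r.2 := fun r hr => hl'mem r (List.drop_subset _ _ hr)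
      have hmem1 : ∀ r ∈ l1, r.1 < r.2 := by
        intro r hr
        rw [hl1, List.mem_append, List.mem_cons, List.mem_cons] at hr
        rcases hr with h | h | h | h
        · exact hmemA r h
        · subst h; show (p.1 : ℕ) < (q.2 : ℕ); omega
        · subst h; show (q.1 : ℕ) < (p.2 : ℕ); omega
        · exact hmemB r h
      have hmem2 : ∀ r ∈ l2, r.1 < r.2 := by
        intro r hr
        rw [hl2, List.mem_append, List.mem_cons, List.mem_cons] at hr
        rcases hr with h | h | h | h
        · exact hmemA r h
        · subst h; show (p.1 : ℕ) < (q.1 : ℕ); omega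
        · subst h; show (q.2 : ℕ) < (p.2 : ℕ); omega
        · exact hmemB r h
      have hsq := sq_lemma hik hkl hviol'
      have hmes1 : mes l1 < mes l' := by
        rw [hdecomp, hl1, mes_decomp, mes_decomp]
        simp only []
        omega
      have hmes2 : mes l2 < mes l' := by
        rw [hdecomp, hl2, mes_decomp, mes_decomp]
        simp only []
        omega
      have key : (l.map f).prod = (l1.map f).prod - (l2.map f).prod := by
        rw [hprod]
        conv_lhs => rw [hdecomp]
        rw [hl1, hl2]
        simp only [List.map_append, List.prod_append, List.map_cons, List.prod_cons, hf]
        linear_combination ((List.map (fun p => α p.1 p.2) A).prod *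
          (List.map (fun p => α p.1 p.2) B).prod) * pluecker α hα p.1 p.2 q.1 q.2
      rw [key]
      have hN1 : mes l1 < N := by omega
      have hN2 : mes l2 < N := by omega
      exact sub_mem (IH (mes l1) hN1 l1 le_rfl hmem1) (IH (mes l2) hN2 l2 le_rfl hmem2)

end Straighten

/-- The subalgebra S_n generated by the Plücker coordinates
α_{ij} (i < j) is spanned over F by the standard monomials (including the empty
product 1). -/
theorem standard_monomials_span (F : Type*) [Field F] (n : ℕ)
    (α : Fin n → Fin n → MvPolynomial (Fin n ⊕ Fin n) F)
    (hα : ∀ i j, α i j = X (Sum.inl i) * X (Sum.inr j) - X (Sum.inl j) * X (Sum.inr i)) :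
    ∀ s ∈ Algebra.adjoin F {p | ∃ i j : Fin n, i < j ∧ p = α i j},
      s ∈ Submodule.span F
        (Set.range (fun l : {l : List (Fin n × Fin n) // IsStandard l} =>
          (l.1.map (fun p => α p.1 p.2)).prod)) := by
  intro s hs
  rw [← Subalgebra.mem_toSubmodule, Algebra.adjoin_eq_span] at hs
  refine Submodule.span_le.mpr ?_ hs
  intro x hx
  obtain ⟨L, hL, rfl⟩ := Submonoid.exists_list_of_mem_closure hx
  have : ∃ pl : List (Fin n × Fin n), (∀ p ∈ pl, p.1 < p.2) ∧
      pl.map (fun p => α p.1 p.2) = L := by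
    clear hx
    induction L with
    | nil => exact ⟨[], by simp, rfl⟩
    | cons a L ih =>
      obtain ⟨i, j, hij, rfl⟩ := hL a List.mem_cons_self
      obtain ⟨pl, hpl, hpl2⟩ := ih (fun y hy => hL y (List.mem_cons_of_mem _ hy))
      refine ⟨(i, j) :: pl, ?_, by simp [hpl2]⟩
      intro p hp
      rcases List.mem_cons.mp hp with h | h
      · subst h; exact hij
      · exact hpl p h
  obtain ⟨pl, hpl, hpl2⟩ := this
  rw [← hpl2]
  exact straighten α hα (mes pl) pl le_rfl hpl
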